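/- Let G be a simple graph on a (possibly infinite) vertex set that is connected and acyclic and in which every vertex has exactly 3 neighbors. Then for every integer k ≥ 1 and every vertex v of G, the collection of k-element sets S of vertices with v ∈ S whose induced subgraph is connected is finite, and its cardinality equals catalan(k+1) − catalan(k). -/

import Mathlib

open SimpleGraph Finset

namespace Subtree

variable {V : Type*} (G : SimpleGraph V)

/-- Branch of `d` away from `c`: vertices reachable from `d` after deleting edge `cd`. -/
def Br (d c : V) : Set V := {x | (G.deleteEdges {s(c,d)}).Reachable d x}

variable {G}

lemma mem_Br_self (d c : V) : d ∈ Br G d c := Reachable.refl d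

lemma Br_swap_del (c d : V) : G.deleteEdges {s(c,d)} = G.deleteEdges {s(d,c)} := by
  rw [Sym2.eq_swap]

lemma not_mem_Br (hacyc : G.IsAcyclic) {c d : V} (h : G.Adj c d) : c ∉ Br G d c := by
  intro hc
  have hb : G.IsBridge s(c,d) := (isAcyclic_iff_forall_adj_isBridge.mp hacyc) h
  rw [isBridge_iff] at hb
  exact hb (hc.symm)

lemma Br_cover (hconn : G.Connected) {c d : V} (x : V) :
    x ∈ Br G c d ∨ x ∈ Br G d c := by
  have key : ∀ {a y : V}, G.Walk a y → (a ∈ Br G c d ∨ a ∈ Br G d c) →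
      (y ∈ Br G c d ∨ y ∈ Br G d c) := by
    intro a y p
    induction p with
    | nil => exact id
    | @cons a b y hab q ih =>
      intro ha
      refine ih ?_
      rcases eq_or_ne s(a,b) s(c,d) with he | he
      · rw [Sym2.eq_iff] at he
        rcases he with ⟨rfl, rfl⟩ | ⟨rfl, rfl⟩
        · exact Or.inr (mem_Br_self _ _)
        · exact Or.inl (mem_Br_self _ _)
      · rcases ha with ha' | ha'
        · left
          exact ha'.trans (Adj.reachable (by
            rw [SimpleGraph.deleteEdges_adj]
            exact ⟨hab, by simpa [← Sym2.eq_swap] using he⟩))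
        · right
          exact ha'.trans (Adj.reachable (by
            rw [SimpleGraph.deleteEdges_adj]
            exact ⟨hab, by simpa using he⟩))
  obtain ⟨p⟩ := hconn c x
  exact key p (Or.inl (mem_Br_self c d))

lemma Br_disjoint (hacyc : G.IsAcyclic) {c d : V} (h : G.Adj c d) {x : V}
    (h1 : x ∈ Br G c d) (h2 : x ∈ Br G d c) : False := by
  have h1' : (G.deleteEdges {s(c,d)}).Reachable c x := by
    rw [Br_swap_del]; exact h1
  exact not_mem_Br hacyc h (h1'.trans h2.symm |>.symm)

/-- If a walk starts inside `Br c d` and ends outside, it uses edge `cd`. -/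
lemma crossing {c d x y : V} (p : G.Walk x y)
    (hx : x ∈ Br G c d) (hy : y ∉ Br G c d) : s(c,d) ∈ p.edges := by
  by_contra he
  refine hy (hx.trans ⟨p.toDeleteEdges {s(d,c)} ?_⟩)
  intro e hep
  rintro rfl
  exact he (by rwa [Sym2.eq_swap])

end Subtree
namespace Subtree2
open Subtree
variable {V : Type*} {G : SimpleGraph V}

/-- A walk in the graph with edge `cd` deleted that avoids `d` can be lifted to the graph
with any edge `s(a,d)` at `d` deleted instead. -/
lemma transfer_avoid {G' : SimpleGraph V} (hle : G' ≤ G) {d a x y : V} (p : G'.Walk x y)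
    (hd : d ∉ p.support) (e : Sym2 V) (he : e ∈ p.edges) :
    e ∈ (G.deleteEdges {s(a,d)}).edgeSet := by
  have heG : e ∈ G.edgeSet := SimpleGraph.edgeSet_mono hle (p.edges_subset_edgeSet he)
  rw [SimpleGraph.edgeSet_deleteEdges]
  refine ⟨heG, ?_⟩
  rintro (rfl : e = s(a,d))
  exact hd (p.snd_mem_support_of_mem_edges he)

/-- Membership in a branch is witnessed by a walk avoiding the root vertex `d`. -/
lemma exists_walk_avoid (hacyc : G.IsAcyclic) {c d x : V} (h : G.Adj c d)
    (hx : x ∈ Br G d c) :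
    ∃ p : (G.deleteEdges {s(c,d)}).Walk d x, p.IsPath ∧ c ∉ p.support := by
  classical
  obtain ⟨p⟩ := hx
  refine ⟨p.bypass, p.bypass_isPath, fun hc => ?_⟩
  have : (G.deleteEdges {s(c,d)}).Reachable d c := ⟨(p.bypass.takeUntil c hc)⟩
  exact not_mem_Br hacyc h this

end Subtree2
namespace Subtree3
open Subtree Subtree2
variable {V : Type*} {G : SimpleGraph V}

lemma sym2_ne_of_ne {c d e : V} (hdc : G.Adj d c) (hne : e ≠ c) : s(d,e) ≠ s(c,d) := by
  intro hs
  rw [Sym2.eq_iff] at hs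
  rcases hs with ⟨h1, h2⟩ | ⟨h1, h2⟩
  · exact G.irrefl (h1 ▸ hdc)
  · exact hne h2

/-- A branch at a neighbour `e` of `d` is contained in the branch of `d` away from
any other neighbour `c` of `d`. -/
lemma Br_subset_Br (hacyc : G.IsAcyclic) {c d e : V} (h1 : G.Adj d e) (h2 : G.Adj d c)
    (hne : e ≠ c) : Br G e d ⊆ Br G d c := by
  intro x hx
  obtain ⟨p, _, hd⟩ := exists_walk_avoid hacyc h1 hx
  have hp : ∀ f ∈ p.edges, f ∈ (G.deleteEdges {s(c,d)}).edgeSet :=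
    transfer_avoid (SimpleGraph.deleteEdges_le _) p hd
  have hq : (G.deleteEdges {s(c,d)}).Walk e x := p.transfer _ hp
  have hadj : (G.deleteEdges {s(c,d)}).Adj d e := by
    rw [SimpleGraph.deleteEdges_adj]
    refine ⟨h1, ?_⟩
    simp only [Set.mem_singleton_iff]
    exact sym2_ne_of_ne h2 hne
  exact (hadj.reachable.trans ⟨hq⟩)

end Subtree3
namespace Subtree4
open Subtree Subtree2 Subtree3
variable {V : Type*} {G : SimpleGraph V}

/-- If the neighbours of `d` are exactly `c, e₁, e₂`, then the three branches at `d`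
intersect in `{d}`. -/
lemma triple_inter (hacyc : G.IsAcyclic) {c d e₁ e₂ : V}
    (hc : G.Adj d c)
    (hnbr : ∀ y, G.Adj d y → y = c ∨ y = e₁ ∨ y = e₂) {x : V}
    (hxc : x ∈ Br G d c) (hx1 : x ∈ Br G d e₁) (hx2 : x ∈ Br G d e₂) : x = d := by
  by_contra hxd
  obtain ⟨p, hpath, hcp⟩ := exists_walk_avoid hacyc hc.symm hxc
  cases p with
  | nil => exact hxd rfl
  | @cons _ b _ hab q =>
    have hGdb : G.Adj d b := (SimpleGraph.deleteEdges_adj.mp hab).1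
    have hbc : b ≠ c := by
      rintro rfl
      exact (SimpleGraph.deleteEdges_adj.mp hab).2 (by rw [Sym2.eq_swap]; rfl)
    have hdq : d ∉ q.support := by
      have := hpath.support_nodup
      simp only [SimpleGraph.Walk.support_cons, List.nodup_cons] at this
      exact this.1
    have hxb : x ∈ Br G b d := by
      have hq : ∀ f ∈ q.edges, f ∈ (G.deleteEdges {s(b,d)}).edgeSet :=
        transfer_avoid (SimpleGraph.deleteEdges_le _) q hdq
      have : (G.deleteEdges {s(d,b)}).Reachable b x := by
        rw [Br_swap_del]
        exact ⟨q.transfer _ hq⟩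
      exact this
    rcases hnbr b hGdb with rfl | rfl | rfl
    · exact hbc rfl
    · exact Br_disjoint hacyc hGdb.symm hxb hx1
    · exact Br_disjoint hacyc hGdb.symm hxb hx2

end Subtree4
namespace Subtree5
open Subtree
variable {V : Type*} {G : SimpleGraph V}

/-- Connectivity of an induced subgraph in terms of walks staying in the set. -/
lemma connected_induce_iff_walks {S : Set V} :
    (G.induce S).Connected ↔
      S.Nonempty ∧ ∀ x ∈ S, ∀ y ∈ S, ∃ p : G.Walk x y, ∀ z ∈ p.support, z ∈ S := by
  constructor
  · intro h
    refine ⟨h.nonempty.elim fun x => ⟨x.1, x.2⟩, fun x hx y hy => ?_⟩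
    obtain ⟨q⟩ := h.preconnected ⟨x, hx⟩ ⟨y, hy⟩
    refine ⟨q.map (SimpleGraph.Embedding.induce S).toHom, fun z hz => ?_⟩
    erw [SimpleGraph.Walk.support_map, List.mem_map] at hz
    obtain ⟨⟨w, hw⟩, _, rfl⟩ := hz
    exact hw
  · rintro ⟨⟨u, hu⟩, hwalk⟩
    refine SimpleGraph.induce_connected_of_patches u hu fun {y} hy => ?_
    obtain ⟨p, hp⟩ := hwalk u hu y hy
    refine ⟨{z | z ∈ p.support}, fun z hz => hp z hz, p.start_mem_support,
      p.end_mem_support, ?_⟩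
    exact (p.connected_induce_support).preconnected _ _

end Subtree5
namespace Subtree6
open Subtree Subtree5
variable {V : Type*} {G : SimpleGraph V}

/-- A path with both endpoints in `Br c d` stays in the complement of `Br d c`. -/
lemma path_confined (hacyc : G.IsAcyclic) {c d x y z : V} (hcd : G.Adj c d)
    (p : G.Walk x y) (hp : p.IsPath) (hx : x ∈ Br G c d) (hy : y ∈ Br G c d)
    (hz : z ∈ p.support) : z ∈ Br G c d := by
  classical
  by_contra hzc
  have h1 : s(c,d) ∈ (p.takeUntil z hz).edges := crossing _ hx hzc
  have h2 : s(c,d) ∈ (p.dropUntil z hz).edges := by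
    have := crossing (c := c) (d := d) ((p.dropUntil z hz).reverse) hy hzc
    rwa [SimpleGraph.Walk.edges_reverse, List.mem_reverse] at this
  have hnd : p.edges.Nodup := hp.isTrail.edges_nodup
  rw [← SimpleGraph.Walk.take_spec p hz, SimpleGraph.Walk.edges_append,
    List.nodup_append] at hnd
  exact hnd.2.2 _ h1 _ h2 rfl

/-- In a connected set containing `c`, any point of `Br d c` forces `d` to be in the set. -/
lemma mem_of_branch_mem (hacyc : G.IsAcyclic) {c d : V} (hcd : G.Adj c d)
    {S : Set V} (hconnS : (G.induce S).Connected) (hcS : c ∈ S) {x : V}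
    (hxS : x ∈ S) (hx : x ∈ Br G d c) : d ∈ S := by
  obtain ⟨-, hwalk⟩ := connected_induce_iff_walks.mp hconnS
  obtain ⟨p, hp⟩ := hwalk c hcS x hxS
  have hxc : x ∉ Br G c d := fun h => Br_disjoint hacyc hcd h hx
  have hcross : s(c,d) ∈ p.edges := crossing p (mem_Br_self c d) hxc
  exact hp d (p.snd_mem_support_of_mem_edges hcross)

end Subtree6
namespace Subtree7
open Subtree Subtree5 Subtree6
variable {V : Type*} (G : SimpleGraph V)

/-- Connected `n`-sets containing `c` inside `Q`. -/
def Fam (c : V) (Q : Set V) (n : ℕ) : Set (Finset V) :=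
  {S | c ∈ S ∧ S.card = n ∧ ↑S ⊆ Q ∧ (G.induce (S : Set V)).Connected}

/-- Possibly-empty connected `n`-sets in the branch `Br d c`, containing `d` if nonempty. -/
def UFam (d c : V) (n : ℕ) : Set (Finset V) :=
  {S | S.card = n ∧ ↑S ⊆ Br G d c ∧
    (S.Nonempty → d ∈ S ∧ (G.induce (S : Set V)).Connected)}

variable {G}

lemma Fam_zero (c : V) (Q : Set V) : Fam G c Q 0 = ∅ := by
  ext S
  simp only [Fam, Set.mem_setOf_eq, Set.mem_empty_iff_false, iff_false, not_and]
  intro hc h0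
  exact absurd (Finset.card_eq_zero.mp h0 ▸ hc) (Finset.notMem_empty c)

lemma UFam_zero (d c : V) : UFam G d c 0 = {∅} := by
  ext S
  simp only [UFam, Set.mem_setOf_eq, Set.mem_singleton_iff, Finset.card_eq_zero]
  constructor
  · exact fun h => h.1
  · rintro rfl
    simp

lemma UFam_succ (d c : V) (n : ℕ) : UFam G d c (n+1) = Fam G d (Br G d c) (n+1) := by
  ext S
  simp only [UFam, Fam, Set.mem_setOf_eq]
  constructor
  · rintro ⟨hcard, hsub, hne⟩
    have hS : S.Nonempty := Finset.card_pos.mp (hcard ▸ n.succ_pos)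
    exact ⟨(hne hS).1, hcard, hsub, (hne hS).2⟩
  · rintro ⟨hd, hcard, hsub, hconn⟩
    exact ⟨hcard, hsub, fun _ => ⟨hd, hconn⟩⟩

lemma decomp [DecidableEq V] (hconn : G.Connected) (hacyc : G.IsAcyclic) {c d : V} (hcd : G.Adj c d)
    {Q : Set V} (hQ : Q ⊆ Br G c d) {n : ℕ} {S : Finset V}
    (hS : S ∈ Fam G c (Q ∪ Br G d c) n) :
    ∃ S₁ S₂ : Finset V, S₁ ∈ Fam G c Q S₁.card ∧ S₂ ∈ UFam G d c S₂.card ∧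
      S = S₁ ∪ S₂ ∧ S₁.card + S₂.card = n := by
  classical
  obtain ⟨hcS, hcard, hsub, hconnS⟩ := hS
  set S₂ : Finset V := S.filter (· ∈ Br G d c) with hS₂def
  set S₁ : Finset V := S \ S₂ with hS₁def
  have hS₂sub : S₂ ⊆ S := Finset.filter_subset _ _
  have hmem₁ : ∀ x, x ∈ S₁ ↔ x ∈ S ∧ x ∉ Br G d c := by
    intro x
    simp [hS₁def, hS₂def, Finset.mem_sdiff, Finset.mem_filter]
    tauto
  have hmem₂ : ∀ x, x ∈ S₂ ↔ x ∈ S ∧ x ∈ Br G d c := by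
    intro x; simp [hS₂def, Finset.mem_filter]
  have hc1 : c ∈ S₁ := (hmem₁ c).mpr ⟨hcS, not_mem_Br hacyc hcd⟩
  have hS1Q : ↑S₁ ⊆ Q := by
    intro x hx
    rw [Finset.mem_coe, hmem₁] at hx
    rcases hsub hx.1 with h | h
    · exact h
    · exact absurd h hx.2
  have hS1Br : ∀ x ∈ S₁, x ∈ Br G c d := fun x hx => hQ (hS1Q hx)
  refine ⟨S₁, S₂, ⟨hc1, rfl, hS1Q, ?_⟩, ⟨rfl, ?_, ?_⟩, ?_, ?_⟩
  · -- connectivity of S₁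
    rw [connected_induce_iff_walks]
    refine ⟨⟨c, hc1⟩, fun x hx y hy => ?_⟩
    rw [Finset.mem_coe] at hx hy
    obtain ⟨-, hwalk⟩ := connected_induce_iff_walks.mp hconnS
    obtain ⟨p, hp⟩ := hwalk x ((hmem₁ x).mp hx).1 y ((hmem₁ y).mp hy).1
    refine ⟨p.bypass, fun z hz => ?_⟩
    have hzS : z ∈ S := hp z (p.support_bypass_subset hz)
    have hzBr : z ∈ Br G c d :=
      path_confined hacyc hcd p.bypass p.bypass_isPath
        (hS1Br x hx) (hS1Br y hy) hz
    rw [Finset.mem_coe, hmem₁]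
    exact ⟨hzS, fun h => Br_disjoint hacyc hcd hzBr h⟩
  · exact fun x hx => ((hmem₂ x).mp hx).2
  · rintro ⟨a, ha⟩
    have had : d ∈ S := mem_of_branch_mem hacyc hcd hconnS hcS
      (((hmem₂ a).mp ha).1) (((hmem₂ a).mp ha).2)
    have hd2 : d ∈ S₂ := (hmem₂ d).mpr ⟨had, mem_Br_self d c⟩
    refine ⟨hd2, ?_⟩
    rw [connected_induce_iff_walks]
    refine ⟨⟨d, hd2⟩, fun x hx y hy => ?_⟩
    rw [Finset.mem_coe] at hx hy
    obtain ⟨-, hwalk⟩ := connected_induce_iff_walks.mp hconnS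
    obtain ⟨p, hp⟩ := hwalk x ((hmem₂ x).mp hx).1 y ((hmem₂ y).mp hy).1
    refine ⟨p.bypass, fun z hz => ?_⟩
    have hzS : z ∈ S := hp z (p.support_bypass_subset hz)
    have hzBr : z ∈ Br G d c :=
      path_confined hacyc hcd.symm p.bypass p.bypass_isPath
        (((hmem₂ x).mp hx).2) (((hmem₂ y).mp hy).2) hz
    rw [Finset.mem_coe, hmem₂]
    exact ⟨hzS, hzBr⟩
  · exact (Finset.sdiff_union_of_subset hS₂sub).symm
  · rw [hS₁def, ← hcard]
    exact Finset.card_sdiff_add_card_eq_card hS₂sub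

end Subtree7
namespace Subtree8
open Subtree Subtree5 Subtree6 Subtree7
variable {V : Type*} {G : SimpleGraph V} [DecidableEq V]

lemma join (hacyc : G.IsAcyclic) {c d : V} (hcd : G.Adj c d)
    {Q : Set V} (hQ : Q ⊆ Br G c d) {j i : ℕ} {S₁ S₂ : Finset V}
    (h1 : S₁ ∈ Fam G c Q j) (h2 : S₂ ∈ UFam G d c i) :
    S₁ ∪ S₂ ∈ Fam G c (Q ∪ Br G d c) (j + i) := by
  obtain ⟨hc, hj, hsub1, hconn1⟩ := h1
  obtain ⟨hi, hsub2, hne⟩ := h2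
  have hdisj : Disjoint S₁ S₂ := by
    rw [Finset.disjoint_left]
    intro x hx1 hx2
    exact Br_disjoint hacyc hcd (hQ (hsub1 hx1)) (hsub2 hx2)
  refine ⟨Finset.mem_union_left _ hc, ?_, ?_, ?_⟩
  · rw [Finset.card_union_of_disjoint hdisj, hj, hi]
  · rw [Finset.coe_union]
    exact Set.union_subset_union hsub1 hsub2
  · rcases S₂.eq_empty_or_nonempty with rfl | hS2ne
    · rw [Finset.union_empty]; exact hconn1
    · obtain ⟨hd, hconn2⟩ := hne hS2ne
      rw [Finset.coe_union]
      exact SimpleGraph.connected_induce_union hconn1.preconnected hconn2.preconnected hc hd hcd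

lemma recover (hacyc : G.IsAcyclic) {c d : V} (hcd : G.Adj c d)
    {Q : Set V} (hQ : Q ⊆ Br G c d) {j i j' i' : ℕ} {S₁ S₂ S₁' S₂' : Finset V}
    (h1 : S₁ ∈ Fam G c Q j) (h2 : S₂ ∈ UFam G d c i)
    (h1' : S₁' ∈ Fam G c Q j') (h2' : S₂' ∈ UFam G d c i')
    (heq : S₁ ∪ S₂ = S₁' ∪ S₂') : S₁ = S₁' ∧ S₂ = S₂' := by
  have key : ∀ (A B A' B' : Finset V), ↑A ⊆ Q → ↑B ⊆ Br G d c → ↑A' ⊆ Q →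
      ↑B' ⊆ Br G d c → A ∪ B = A' ∪ B' → A ⊆ A' := by
    intro A B A' B' hA hB hA' hB' he
    intro x hx
    have : x ∈ A' ∪ B' := he ▸ Finset.mem_union_left _ hx
    rcases Finset.mem_union.mp this with h | h
    · exact h
    · exact absurd (hB' h) (fun hh => Br_disjoint hacyc hcd (hQ (hA hx)) hh)
  have e1 : S₁ = S₁' :=
    le_antisymm (key _ S₂ _ S₂' h1.2.2.1 h2.2.1 h1'.2.2.1 h2'.2.1 heq)
      (key _ S₂' _ S₂ h1'.2.2.1 h2'.2.1 h1.2.2.1 h2.2.1 heq.symm)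
  refine ⟨e1, ?_⟩
  have key2 : ∀ (B B' : Finset V), ↑B ⊆ Br G d c → ↑B' ⊆ Br G d c →
      S₁ ∪ B = S₁' ∪ B' → B ⊆ B' := by
    intro B B' hB hB' he x hx
    have : x ∈ S₁' ∪ B' := he ▸ Finset.mem_union_right _ hx
    rcases Finset.mem_union.mp this with h | h
    · exact absurd (hB hx) (fun hh => Br_disjoint hacyc hcd (hQ (h1'.2.2.1 h)) hh)
    · exact h
  exact le_antisymm (key2 _ _ h2.2.1 h2'.2.1 heq)
    (key2 _ _ h2'.2.1 h2.2.1 (e1 ▸ heq.symm))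

end Subtree8
namespace Count
open Finset

lemma biUnion_count {α ι : Type*} (t : Finset ι) (f : ι → Set α)
    (hfin : ∀ i ∈ t, (f i).Finite)
    (hdisj : ∀ i ∈ t, ∀ j ∈ t, i ≠ j → Disjoint (f i) (f j)) :
    (⋃ i ∈ t, f i).Finite ∧ (⋃ i ∈ t, f i).ncard = ∑ i ∈ t, (f i).ncard := by
  classical
  induction t using Finset.induction_on with
  | empty => simp
  | @insert a s ha ih =>
    have hfin' : ∀ i ∈ s, (f i).Finite := fun i hi => hfin i (mem_insert_of_mem hi)
    have hdisj' : ∀ i ∈ s, ∀ j ∈ s, i ≠ j → Disjoint (f i) (f j) :=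
      fun i hi j hj => hdisj i (mem_insert_of_mem hi) j (mem_insert_of_mem hj)
    obtain ⟨hUfin, hUcard⟩ := ih hfin' hdisj'
    have hsplit : (⋃ i ∈ insert a s, f i) = f a ∪ ⋃ i ∈ s, f i := by
      simp [Set.biUnion_insert]
    have hdisj2 : Disjoint (f a) (⋃ i ∈ s, f i) := by
      rw [Set.disjoint_iff_inter_eq_empty, Set.inter_iUnion₂]
      refine Set.eq_empty_of_forall_notMem fun x hx => ?_
      simp only [Set.mem_iUnion, Set.mem_inter_iff] at hx
      obtain ⟨i, hi, hxa, hxi⟩ := hx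
      exact (hdisj a (mem_insert_self a s) i (mem_insert_of_mem hi)
        (fun h => ha (h ▸ hi))).ne_of_mem hxa hxi rfl
    have hafin := hfin a (mem_insert_self a s)
    constructor
    · rw [hsplit]; exact hafin.union hUfin
    · rw [hsplit, Set.ncard_union_eq hdisj2 hafin hUfin, hUcard,
        Finset.sum_insert ha]

lemma prod_ncard {α β : Type*} (s : Set α) (t : Set β) :
    (s ×ˢ t).ncard = s.ncard * t.ncard := by
  rw [← Nat.card_coe_set_eq, ← Nat.card_coe_set_eq, ← Nat.card_coe_set_eq,
    Nat.card_congr (Equiv.Set.prod s t), Nat.card_prod]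

end Count
namespace Subtree9
open Subtree Subtree5 Subtree6 Subtree7 Subtree8 Count Finset
variable {V : Type*} {G : SimpleGraph V} [DecidableEq V]

lemma split_card (hconn : G.Connected) (hacyc : G.IsAcyclic) {c d : V} (hcd : G.Adj c d)
    {Q : Set V} (hQ : Q ⊆ Br G c d) (n : ℕ)
    (hF : ∀ p : ℕ × ℕ, p ∈ antidiagonal n → 1 ≤ p.1 → (Fam G c Q p.1).Finite)
    (hU : ∀ p : ℕ × ℕ, p ∈ antidiagonal n → 1 ≤ p.1 → (UFam G d c p.2).Finite) :
    (Fam G c (Q ∪ Br G d c) n).Finite ∧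
    (Fam G c (Q ∪ Br G d c) n).ncard
      = ∑ p ∈ antidiagonal n, (Fam G c Q p.1).ncard * (UFam G d c p.2).ncard := by
  set f : ℕ × ℕ → Set (Finset V) :=
    fun p => (fun t : Finset V × Finset V => t.1 ∪ t.2) '' (Fam G c Q p.1 ×ˢ UFam G d c p.2)
    with hfdef
  have hE : Fam G c (Q ∪ Br G d c) n = ⋃ p ∈ antidiagonal n, f p := by
    ext S
    simp only [Set.mem_iUnion, hfdef, Set.mem_image, Set.mem_prod, exists_prop]
    constructor
    · intro hS
      obtain ⟨S₁, S₂, h1, h2, heq, hsum⟩ := decomp hconn hacyc hcd hQ hS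
      exact ⟨(S₁.card, S₂.card), Finset.HasAntidiagonal.mem_antidiagonal.mpr hsum,
        (S₁, S₂), ⟨h1, h2⟩, heq.symm⟩
    · rintro ⟨p, hp, ⟨S₁, S₂⟩, ⟨h1, h2⟩, rfl⟩
      have := join hacyc hcd hQ h1 h2
      rwa [Finset.HasAntidiagonal.mem_antidiagonal.mp hp] at this
  have hfinf : ∀ p ∈ antidiagonal n, (f p).Finite := by
    intro p hp
    rcases Nat.eq_zero_or_pos p.1 with h0 | h1
    · rw [hfdef]
      simp only [h0, Fam_zero]
      simp
    · exact ((hF p hp h1).prod (hU p hp h1)).image _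
  have hdisj : ∀ p ∈ antidiagonal n, ∀ q ∈ antidiagonal n, p ≠ q → Disjoint (f p) (f q) := by
    intro p hp q hq hpq
    rw [Set.disjoint_left]
    rintro S ⟨⟨S₁, S₂⟩, ⟨h1, h2⟩, rfl⟩ ⟨⟨S₁', S₂'⟩, ⟨h1', h2'⟩, heq⟩
    obtain ⟨e1, e2⟩ := recover hacyc hcd hQ h1' h2' h1 h2 heq
    apply hpq
    have : p.1 = q.1 := by rw [← h1.2.1, ← h1'.2.1, e1]
    have h2eq : p.2 = q.2 := by rw [← h2.1, ← h2'.1, e2]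
    exact Prod.ext this h2eq
  obtain ⟨hfin, hcard⟩ := biUnion_count (antidiagonal n) f hfinf hdisj
  rw [hE]
  refine ⟨hfin, hcard.trans (Finset.sum_congr rfl fun p hp => ?_)⟩
  rcases Nat.eq_zero_or_pos p.1 with h0 | h1
  · rw [hfdef]
    simp only [h0, Fam_zero]
    simp
  · rw [hfdef]
    have hinj : Set.InjOn (fun t : Finset V × Finset V => t.1 ∪ t.2)
        (Fam G c Q p.1 ×ˢ UFam G d c p.2) := by
      rintro ⟨S₁, S₂⟩ ⟨h1, h2⟩ ⟨S₁', S₂'⟩ ⟨h1', h2'⟩ heq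
      obtain ⟨e1, e2⟩ := recover hacyc hcd hQ h1 h2 h1' h2' heq
      exact Prod.ext e1 e2
    rw [Set.ncard_image_of_injOn hinj, prod_ncard]

end Subtree9
namespace Subtree10
open Subtree Subtree5 Subtree6 Subtree7 Count Finset
variable {V : Type*} {G : SimpleGraph V} [DecidableEq V]

lemma fam_singleton (c : V) (j : ℕ) :
    (Fam G c {c} j).Finite ∧ (Fam G c {c} j).ncard = if j = 1 then 1 else 0 := by
  have hset : Fam G c {c} j = if j = 1 then {({c} : Finset V)} else ∅ := by
    ext S
    simp only [Fam, Set.mem_setOf_eq]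
    constructor
    · rintro ⟨hc, hcard, hsub, -⟩
      have hS : S = {c} := by
        apply Finset.Subset.antisymm
        · intro x hx
          simpa using hsub hx
        · simpa using hc
      subst hS
      simp at hcard
      simp [← hcard]
    · intro hS
      split_ifs at hS with h
      · simp only [Set.mem_singleton_iff] at hS
        subst hS
        refine ⟨Finset.mem_singleton_self c, by simp [h], by simp, ?_⟩
        rw [connected_induce_iff_walks]
        refine ⟨⟨c, by simp⟩, fun x hx y hy => ?_⟩
        simp only [Finset.coe_singleton, Set.mem_singleton_iff] at hx hy
        subst hx; subst hy
        exact ⟨SimpleGraph.Walk.nil, by simp⟩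
      · exact absurd hS (Set.notMem_empty S)
  rw [hset]
  split_ifs <;> simp

lemma neighbors_extract (hdeg : ∀ w : V, (G.neighborSet w).ncard = 3) {c d : V}
    (h : G.Adj d c) :
    ∃ e₁ e₂ : V, G.Adj d e₁ ∧ G.Adj d e₂ ∧ e₁ ≠ e₂ ∧ e₁ ≠ c ∧ e₂ ≠ c ∧
      (∀ y, G.Adj d y → y = c ∨ y = e₁ ∨ y = e₂) := by
  have h3 := hdeg d
  have hfin : (G.neighborSet d).Finite := by
    apply Set.finite_of_ncard_ne_zero
    omega
  rw [Set.ncard_eq_toFinset_card _ hfin] at h3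
  obtain ⟨a, b, e, hab, hae, hbe, habc⟩ := Finset.card_eq_three.mp h3
  have hcmem : c ∈ hfin.toFinset := by
    rw [Set.Finite.mem_toFinset]
    exact h
  have hmem : ∀ y, G.Adj d y ↔ y ∈ ({a, b, e} : Finset V) := by
    intro y
    rw [← habc, Set.Finite.mem_toFinset]
    exact Iff.rfl
  rw [habc] at hcmem
  simp only [Finset.mem_insert, Finset.mem_singleton] at hcmem
  have hadj : ∀ y ∈ ({a, b, e} : Finset V), G.Adj d y := by
    intro y hy
    rw [hmem y]
    exact hy
  rcases hcmem with rfl | rfl | rfl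
  · refine ⟨b, e, hadj b (by simp), hadj e (by simp), hbe, fun hh => hab hh.symm,
      fun hh => hae hh.symm, fun y hy => ?_⟩
    have := (hmem y).mp hy
    simp only [Finset.mem_insert, Finset.mem_singleton] at this
    tauto
  · refine ⟨a, e, hadj a (by simp), hadj e (by simp), hae, hab, fun hh => hbe hh.symm,
      fun y hy => ?_⟩
    have := (hmem y).mp hy
    simp only [Finset.mem_insert, Finset.mem_singleton] at this
    tauto
  · refine ⟨a, b, hadj a (by simp), hadj b (by simp), hab, hae, hbe, fun y hy => ?_⟩
    have := (hmem y).mp hy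
    simp only [Finset.mem_insert, Finset.mem_singleton] at this
    tauto

end Subtree10
namespace Subtree11
open Subtree Subtree3 Subtree4 Subtree7 Subtree9 Subtree10 Count Finset
variable {V : Type*} {G : SimpleGraph V} [DecidableEq V]

lemma fam_Q1 (hconn : G.Connected) (hacyc : G.IsAcyclic) {d e₁ : V}
    (he1 : G.Adj d e₁) (j : ℕ)
    (hU1 : ∀ i < j, (UFam G e₁ d i).Finite ∧ (UFam G e₁ d i).ncard = catalan i) :
    (Fam G d (({d} : Set V) ∪ Br G e₁ d) j).Finite ∧
      (Fam G d (({d} : Set V) ∪ Br G e₁ d) j).ncard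
        = if 1 ≤ j then catalan (j-1) else 0 := by
  have hQsub : ({d} : Set V) ⊆ Br G d e₁ := by
    intro x hx
    rw [Set.mem_singleton_iff] at hx
    subst hx
    exact mem_Br_self _ _
  have hpi : ∀ p : ℕ × ℕ, p ∈ antidiagonal j → 1 ≤ p.1 → p.2 < j := by
    intro p hp h1
    have := Finset.HasAntidiagonal.mem_antidiagonal.mp hp
    omega
  obtain ⟨hfin, hcard⟩ := split_card hconn hacyc he1 hQsub j
    (fun p _ _ => (fam_singleton d p.1).1)
    (fun p hp h1 => (hU1 p.2 (hpi p hp h1)).1)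
  refine ⟨hfin, hcard.trans ?_⟩
  have hterm : ∀ p ∈ antidiagonal j,
      (Fam G d {d} p.1).ncard * (UFam G e₁ d p.2).ncard
        = if p.1 = 1 then catalan p.2 else 0 := by
    intro p hp
    rcases eq_or_ne p.1 1 with h1 | h1
    · rw [(fam_singleton d p.1).2, if_pos h1, (hU1 p.2 (hpi p hp (le_of_eq h1.symm))).2,
        if_pos h1, one_mul]
    · rw [(fam_singleton d p.1).2, if_neg h1, if_neg h1, zero_mul]
  rw [Finset.sum_congr rfl hterm]
  match j with
  | 0 => simp
  | j + 1 =>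
    rw [Finset.Nat.sum_antidiagonal_succ]
    simp only [if_pos (Nat.le_add_left 1 j), Nat.add_sub_cancel]
    rw [if_neg (by omega), zero_add]
    rw [Finset.sum_eq_single_of_mem (0, j) (by simp)]
    · simp
    · intro b hb hbne
      rw [if_neg]
      intro hb1
      apply hbne
      have := Finset.HasAntidiagonal.mem_antidiagonal.mp hb
      have : b.2 = j := by omega
      exact Prod.ext (by omega) this

end Subtree11
namespace Subtree12
open Subtree Subtree3 Subtree4 Subtree7 Subtree9 Subtree10 Subtree11 Count Finset
variable {V : Type*} {G : SimpleGraph V} [DecidableEq V]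

lemma fam_branch (hconn : G.Connected) (hacyc : G.IsAcyclic)
    (hdeg : ∀ w : V, (G.neighborSet w).ncard = 3) (m : ℕ)
    (hU : ∀ i < m, ∀ d e : V, G.Adj d e →
      (UFam G e d i).Finite ∧ (UFam G e d i).ncard = catalan i)
    {c d : V} (hdc : G.Adj d c) :
    (Fam G d (Br G d c) m).Finite ∧
      (Fam G d (Br G d c) m).ncard = if 1 ≤ m then catalan m else 0 := by
  obtain ⟨e₁, e₂, he1, he2, h12, h1c, h2c, hnbr⟩ := neighbors_extract hdeg hdc
  -- branch inclusions
  have hb1c : Br G e₁ d ⊆ Br G d c := Br_subset_Br hacyc he1 hdc h1c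
  have hb2c : Br G e₂ d ⊆ Br G d c := Br_subset_Br hacyc he2 hdc h2c
  have hb12 : Br G e₁ d ⊆ Br G d e₂ := Br_subset_Br hacyc he1 he2 h12
  have hQ1 : Br G d c ∩ Br G d e₂ = ({d} : Set V) ∪ Br G e₁ d := by
    apply Set.Subset.antisymm
    · rintro x ⟨hx1, hx2⟩
      rcases Br_cover hconn (c := d) (d := e₁) x with h | h
      · left
        rw [Set.mem_singleton_iff]
        exact triple_inter hacyc hdc (fun y hy => by
          rcases hnbr y hy with h' | h' | h' <;> tauto) hx1 h hx2
      · exact Or.inr h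
    · rintro x (hx | hx)
      · rw [Set.mem_singleton_iff] at hx
        subst hx
        exact ⟨mem_Br_self _ _, mem_Br_self _ _⟩
      · exact ⟨hb1c hx, hb12 hx⟩
  have hQ2 : Br G d c = (Br G d c ∩ Br G d e₂) ∪ Br G e₂ d := by
    apply Set.Subset.antisymm
    · intro x hx
      rcases Br_cover hconn (c := d) (d := e₂) x with h | h
      · exact Or.inl ⟨hx, h⟩
      · exact Or.inr h
    · rintro x (hx | hx)
      · exact hx.1
      · exact hb2c hx
  -- counts for the inner family
  have inner : ∀ j ≤ m, (Fam G d (Br G d c ∩ Br G d e₂) j).Finite ∧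
      (Fam G d (Br G d c ∩ Br G d e₂) j).ncard
        = if 1 ≤ j then catalan (j-1) else 0 := by
    intro j hj
    rw [hQ1]
    exact fam_Q1 hconn hacyc he1 j
      (fun i hi => hU i (lt_of_lt_of_le hi hj) d e₁ he1)
  match m with
  | 0 =>
    rw [Fam_zero]
    simp
  | m + 1 =>
    rw [hQ2]
    have hpi : ∀ p : ℕ × ℕ, p ∈ antidiagonal (m+1) → 1 ≤ p.1 → p.2 < m + 1 := by
      intro p hp h1
      have := Finset.HasAntidiagonal.mem_antidiagonal.mp hp
      omega
    have hple : ∀ p : ℕ × ℕ, p ∈ antidiagonal (m+1) → p.1 ≤ m + 1 := by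
      intro p hp
      have := Finset.HasAntidiagonal.mem_antidiagonal.mp hp
      omega
    obtain ⟨hfin, hcard⟩ := split_card hconn hacyc he2 Set.inter_subset_right (m+1)
      (fun p hp _ => (inner p.1 (hple p hp)).1)
      (fun p hp h1 => (hU p.2 (hpi p hp h1) d e₂ he2).1)
    refine ⟨hfin, hcard.trans ?_⟩
    have hterm : ∀ p ∈ antidiagonal (m+1),
        (Fam G d (Br G d c ∩ Br G d e₂) p.1).ncard * (UFam G e₂ d p.2).ncard
          = if 1 ≤ p.1 then catalan (p.1 - 1) * catalan p.2 else 0 := by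
      intro p hp
      rcases Nat.lt_or_ge p.1 1 with h1 | h1
      · rw [(inner p.1 (hple p hp)).2, if_neg (by omega), if_neg (by omega), zero_mul]
      · rw [(inner p.1 (hple p hp)).2, if_pos h1, if_pos h1,
          (hU p.2 (hpi p hp h1) d e₂ he2).2]
    rw [Finset.sum_congr rfl hterm, Finset.Nat.sum_antidiagonal_succ,
      if_neg (by omega), zero_add, if_pos (by omega)]
    rw [catalan_succ']
    apply Finset.sum_congr rfl
    intro p hp
    rw [if_pos (by omega), Nat.add_sub_cancel]

end Subtree12
namespace Subtree13
open Subtree Subtree7 Subtree12 Finset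
variable {V : Type*} {G : SimpleGraph V} [DecidableEq V]

lemma ucount (hconn : G.Connected) (hacyc : G.IsAcyclic)
    (hdeg : ∀ w : V, (G.neighborSet w).ncard = 3) :
    ∀ n, ∀ d e : V, G.Adj d e →
      (UFam G e d n).Finite ∧ (UFam G e d n).ncard = catalan n := by
  intro n
  induction n using Nat.strong_induction_on with
  | _ n ih =>
    intro d e h
    match n with
    | 0 =>
      rw [UFam_zero]
      exact ⟨Set.finite_singleton _, by simp [catalan_zero]⟩
    | n + 1 =>
      rw [UFam_succ]
      have := fam_branch hconn hacyc hdeg (n+1) (fun i hi => ih i hi) (c := d) h.symm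
      rw [if_pos (by omega)] at this
      exact this

end Subtree13
open Subtree Subtree7 Subtree9 Subtree10 Subtree12 Subtree13 Finset in
theorem card_subtrees_through_vertex {V : Type*} (G : SimpleGraph V)
    (hconn : G.Connected) (hacyc : G.IsAcyclic)
    (hdeg : ∀ v : V, (G.neighborSet v).ncard = 3)
    (k : ℕ) (hk : 1 ≤ k) (v : V) :
    {S : Finset V | v ∈ S ∧ S.card = k ∧ (G.induce (S : Set V)).Connected}.Finite ∧
    {S : Finset V | v ∈ S ∧ S.card = k ∧ (G.induce (S : Set V)).Connected}.ncard
      = catalan (k + 1) - catalan k := by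
  classical
  -- a neighbour of `v`
  obtain ⟨u, hu⟩ : (G.neighborSet v).Nonempty := by
    apply Set.nonempty_of_ncard_ne_zero
    rw [hdeg v]
    omega
  have hvu : G.Adj v u := hu
  have hA : {S : Finset V | v ∈ S ∧ S.card = k ∧ (G.induce (S : Set V)).Connected}
      = Fam G v (Br G v u ∪ Br G u v) k := by
    ext S
    simp only [Fam, Set.mem_setOf_eq]
    constructor
    · rintro ⟨h1, h2, h3⟩
      exact ⟨h1, h2, fun x _ => Br_cover hconn x, h3⟩
    · rintro ⟨h1, h2, _, h3⟩
      exact ⟨h1, h2, h3⟩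
  have hufam : ∀ i, (UFam G u v i).Finite ∧ (UFam G u v i).ncard = catalan i :=
    fun i => ucount hconn hacyc hdeg i v u hvu
  have hffam : ∀ j, (Fam G v (Br G v u) j).Finite ∧
      (Fam G v (Br G v u) j).ncard = if 1 ≤ j then catalan j else 0 :=
    fun j => fam_branch hconn hacyc hdeg j
      (fun i _ => ucount hconn hacyc hdeg i) hvu
  obtain ⟨hfin, hcard⟩ := split_card hconn hacyc hvu (subset_refl (Br G v u)) k
    (fun p _ _ => (hffam p.1).1) (fun p _ _ => (hufam p.2).1)
  rw [hA]
  refine ⟨hfin, hcard.trans ?_⟩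
  have hterm : ∀ p ∈ antidiagonal k,
      (Fam G v (Br G v u) p.1).ncard * (UFam G u v p.2).ncard
        = if 1 ≤ p.1 then catalan p.1 * catalan p.2 else 0 := by
    intro p _
    rw [(hffam p.1).2, (hufam p.2).2]
    rcases Nat.lt_or_ge p.1 1 with h1 | h1
    · rw [if_neg (by omega), if_neg (by omega), zero_mul]
    · rw [if_pos h1, if_pos h1]
  rw [Finset.sum_congr rfl hterm]
  obtain ⟨k', rfl⟩ : ∃ k', k = k' + 1 := ⟨k - 1, by omega⟩
  rw [Finset.Nat.sum_antidiagonal_succ, if_neg (by omega), zero_add]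
  have hsum : ∑ p ∈ antidiagonal k',
      (if 1 ≤ p.1 + 1 then catalan (p.1 + 1) * catalan p.2 else 0)
        = ∑ p ∈ antidiagonal k', catalan (p.1 + 1) * catalan p.2 :=
    Finset.sum_congr rfl fun p _ => by rw [if_pos (by omega)]
  have hcat : catalan (k' + 1 + 1)
      = catalan 0 * catalan (k' + 1) + ∑ p ∈ antidiagonal k',
          catalan (p.1 + 1) * catalan p.2 := by
    rw [catalan_succ', Finset.Nat.sum_antidiagonal_succ]
  rw [hsum]
  rw [catalan_zero, one_mul] at hcat
  omega
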